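/- Suppose (z_ν) is a sequence of nonzero integer points in ℝ^d such that dist(z_ν, ℓ) → 0 for a fixed line ℓ through the origin with ℓ ∩ span(z_ν, z_{ν+1}) = {0} for all ν, and z_ν, z_{ν+1} are linearly independent. Then the covolume Δ_ν of the rank-2 lattice generated by z_ν and z_{ν+1} tends to infinity as ν → ∞. -/

import Mathlib

open Filter

/-- The Euclidean covolume (area of the fundamental parallelogram) of the
rank-2 lattice spanned by two integer vectors `a`, `b` in `ℤ^d`. -/
noncomputable def covol2 {d : ℕ} (a b : Fin d → ℤ) : ℝ :=
  Real.sqrt ((∑ i, (a i : ℝ) ^ 2) * (∑ i, (b i : ℝ) ^ 2) -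
    (∑ i, (a i : ℝ) * (b i : ℝ)) ^ 2)

/-- Embedding of integer points into Euclidean space. -/
noncomputable def intEmb {d : ℕ} (v : Fin d → ℤ) : EuclideanSpace ℝ (Fin d) :=
  WithLp.toLp 2 (fun i => (v i : ℝ))

namespace Covol6
def minor {d : ℕ} (a b : Fin d → ℤ) (i j : Fin d) : ℤ := a i * b j - a j * b i
def gram {d : ℕ} (a b : Fin d → ℤ) : ℤ :=
  (∑ i, a i ^ 2) * (∑ i, b i ^ 2) - (∑ i, a i * b i) ^ 2

lemma lagrange {d : ℕ} (a b : Fin d → ℤ) :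
    2 * gram a b = ∑ i, ∑ j, (minor a b i j) ^ 2 := by
  have e1 : (∑ i, a i ^ 2) * (∑ j, b j ^ 2) = ∑ i, ∑ j, a i ^ 2 * b j ^ 2 :=
    Finset.sum_mul_sum _ _ _ _
  have e2 : (∑ i, a i ^ 2) * (∑ j, b j ^ 2) = ∑ i, ∑ j, a j ^ 2 * b i ^ 2 := by
    rw [mul_comm, Finset.sum_mul_sum]
    exact Finset.sum_congr rfl fun i _ => Finset.sum_congr rfl fun j _ => mul_comm _ _

  have e3 : (∑ i, a i * b i) ^ 2 = ∑ i, ∑ j, (a i * b i) * (a j * b j) := by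
    rw [sq, Finset.sum_mul_sum]
  have expand : ∀ i j : Fin d, (minor a b i j) ^ 2
      = a i ^ 2 * b j ^ 2 + a j ^ 2 * b i ^ 2 - 2 * ((a i * b i) * (a j * b j)) := by
    intro i j; simp only [minor]; ring
  calc 2 * gram a b
      = (∑ i, ∑ j, a i ^ 2 * b j ^ 2) + (∑ i, ∑ j, a j ^ 2 * b i ^ 2)
        - 2 * (∑ i, ∑ j, (a i * b i) * (a j * b j)) := by
        rw [← e1, ← e2, ← e3]; unfold gram; ring
    _ = ∑ i, ∑ j, (minor a b i j) ^ 2 := by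
        simp only [expand, Finset.sum_sub_distrib, Finset.sum_add_distrib, ← Finset.mul_sum]

lemma gram_nonneg {d : ℕ} (a b : Fin d → ℤ) : 0 ≤ gram a b := by
  have h : 0 ≤ ∑ i, ∑ j, (minor a b i j) ^ 2 :=
    Finset.sum_nonneg fun i _ => Finset.sum_nonneg fun j _ => sq_nonneg _
  have := lagrange a b
  linarith

lemma minor_sq_le {d : ℕ} (a b : Fin d → ℤ) (i j : Fin d) :
    (minor a b i j) ^ 2 ≤ 2 * gram a b := by
  rw [lagrange]
  calc (minor a b i j) ^ 2 ≤ ∑ j', (minor a b i j') ^ 2 :=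
        Finset.single_le_sum (f := fun j' => (minor a b i j') ^ 2)
          (fun k _ => sq_nonneg _) (Finset.mem_univ j)
    _ ≤ ∑ i', ∑ j', (minor a b i' j') ^ 2 :=
        Finset.single_le_sum (f := fun i' => ∑ j', (minor a b i' j') ^ 2)
          (fun k _ => Finset.sum_nonneg fun _ _ => sq_nonneg _) (Finset.mem_univ i)

lemma rel_a {d : ℕ} (a b : Fin d → ℤ) (i j k : Fin d) :
    a i * minor a b j k - a j * minor a b i k + a k * minor a b i j = 0 := by
  simp only [minor]; ring

lemma one_le_norm_intEmb {d : ℕ} (v : Fin d → ℤ) (hv : v ≠ 0) : 1 ≤ ‖intEmb v‖ := by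
  obtain ⟨i, hi⟩ := Function.ne_iff.1 hv
  have h1 : (1 : ℝ) ≤ (v i : ℝ) ^ 2 := by
    have h2 : (1 : ℤ) ≤ |v i| := Int.one_le_abs (by simpa using hi)
    have : (1 : ℤ) ≤ (v i) ^ 2 := by nlinarith [sq_abs (v i)]
    exact_mod_cast this
  rw [EuclideanSpace.norm_eq]
  rw [show (1:ℝ) = Real.sqrt 1 by simp]
  apply Real.sqrt_le_sqrt
  calc (1:ℝ) ≤ (v i : ℝ) ^ 2 := h1
    _ ≤ ∑ k, ‖intEmb v k‖ ^ 2 := by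
        refine Finset.single_le_sum (f := fun k => ‖intEmb v k‖ ^ 2)
          (fun k _ => sq_nonneg _) (Finset.mem_univ i) |>.trans_eq' ?_
        simp [intEmb, sq_abs]

lemma covol2_eq {d : ℕ} (a b : Fin d → ℤ) :
    covol2 a b = Real.sqrt ((gram a b : ℝ)) := by
  unfold covol2 gram
  congr 1
  push_cast
  ring
lemma mem_span_of_minors {d : ℕ} (a b : Fin d → ℤ) (i0 j0 : Fin d)
    (h0 : minor a b i0 j0 ≠ 0) (x : EuclideanSpace ℝ (Fin d))
    (hx : ∀ i j k, x i * (minor a b j k : ℝ) - x j * (minor a b i k : ℝ)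
      + x k * (minor a b i j : ℝ) = 0) :
    x ∈ Submodule.span ℝ {intEmb a, intEmb b} := by
  have hμ : ((minor a b i0 j0 : ℝ)) ≠ 0 := Int.cast_ne_zero.2 h0
  refine Submodule.mem_span_pair.2
    ⟨(x i0 * (b j0 : ℝ) - x j0 * (b i0 : ℝ)) / (minor a b i0 j0 : ℝ),
     ((a i0 : ℝ) * x j0 - (a j0 : ℝ) * x i0) / (minor a b i0 j0 : ℝ), ?_⟩
  ext k
  have h := hx i0 j0 k
  simp only [PiLp.add_apply, PiLp.smul_apply, smul_eq_mul, intEmb, PiLp.toLp_apply]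
  rw [div_mul_eq_mul_div, div_mul_eq_mul_div, ← add_div, div_eq_iff hμ]
  simp only [minor] at h ⊢
  push_cast at h ⊢
  linarith [h]

lemma exists_minor_ne_zero {d : ℕ} (a b : Fin d → ℤ) (ha : a ≠ 0)
    (hindep : LinearIndependent ℝ ![intEmb a, intEmb b]) :
    ∃ i j, minor a b i j ≠ 0 := by
  by_contra h
  push_neg at h
  obtain ⟨i, hi⟩ := Function.ne_iff.1 ha
  have hi' : (a i : ℝ) ≠ 0 := Int.cast_ne_zero.2 (by simpa using hi)
  have h2 := (LinearIndependent.pair_iff.1 hindep) (-(b i : ℝ)) ((a i : ℝ)) ?_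
  · exact hi' h2.2
  · ext k
    have hm := h i k
    simp only [minor] at hm
    have hm' : (a i : ℝ) * (b k : ℝ) - (a k : ℝ) * (b i : ℝ) = 0 := by
      exact_mod_cast congrArg (fun t : ℤ => (t : ℝ)) hm
    simp only [PiLp.add_apply, PiLp.smul_apply, smul_eq_mul]
    show -(b i : ℝ) * (a k : ℝ) + (a i : ℝ) * (b k : ℝ) = (0 : EuclideanSpace ℝ (Fin d)) k
    have : (0 : EuclideanSpace ℝ (Fin d)) k = 0 := rfl
    rw [this]
    linarith

end Covol6

open Covol6 Metric

/-- if nonzero integer points `z_ν` approach a line `ℓ` through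
the origin avoiding the planes `span(z_ν, z_{ν+1})`, with `z_ν, z_{ν+1}`
linearly independent, then the covolumes `Δ_ν` of the lattices
`ℤz_ν + ℤz_{ν+1}` tend to infinity. -/
theorem covol_tendsto_atTop {d : ℕ}
    (z : ℕ → (Fin d → ℤ)) (hz : ∀ ν, z ν ≠ 0)
    (ℓ : Submodule ℝ (EuclideanSpace ℝ (Fin d)))
    (hℓ : Module.finrank ℝ ↥ℓ = 1)
    (hindep : ∀ ν, LinearIndependent ℝ ![intEmb (z ν), intEmb (z (ν + 1))])
    (havoid : ∀ ν, ℓ ⊓ Submodule.span ℝ {intEmb (z ν), intEmb (z (ν + 1))} = ⊥)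
    (hdist : Tendsto (fun ν => Metric.infDist (intEmb (z ν)) (ℓ : Set (EuclideanSpace ℝ (Fin d))))
      atTop (nhds 0)) :
    Tendsto (fun ν => covol2 (z ν) (z (ν + 1))) atTop atTop := by
  have hℓne : (ℓ : Set (EuclideanSpace ℝ (Fin d))).Nonempty := ⟨0, ℓ.zero_mem⟩
  have hℓcl : IsClosed (ℓ : Set (EuclideanSpace ℝ (Fin d))) :=
    Submodule.closed_of_finiteDimensional ℓ
  suffices h : ∀ b : ℝ, 0 < b → ∀ᶠ ν in atTop, b ≤ covol2 (z ν) (z (ν + 1)) by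
    refine tendsto_atTop.2 fun b0 => ?_
    exact (h (max b0 1) (lt_of_lt_of_le one_pos (le_max_right _ _))).mono
      fun ν hν => le_trans (le_max_left _ _) hν
  intro b hb
  by_contra hcon
  have hfreq : ∃ᶠ ν in atTop, covol2 (z ν) (z (ν + 1)) < b := by
    simpa [not_le] using (Filter.not_eventually.1 hcon)
  have hSinf : {ν | covol2 (z ν) (z (ν + 1)) < b}.Infinite :=
    Nat.frequently_atTop_iff_infinite.1 hfreq
  set S := {ν | covol2 (z ν) (z (ν + 1)) < b} with hS
  -- gram bound on S
  have hgram : ∀ ν ∈ S, ((gram (z ν) (z (ν + 1)) : ℝ)) < b ^ 2 := by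
    intro ν hν
    have h0 : (0 : ℝ) ≤ ((gram (z ν) (z (ν + 1)) : ℝ)) := by
      exact_mod_cast gram_nonneg (z ν) (z (ν + 1))
    have h1 : covol2 (z ν) (z (ν + 1)) < b := hν
    rw [covol2_eq] at h1
    nlinarith [Real.sq_sqrt h0, Real.sqrt_nonneg ((gram (z ν) (z (ν + 1)) : ℝ))]
  -- minor bound on S
  set K : ℤ := ⌈2 * b ^ 2⌉ with hKdef
  have hK : ∀ ν ∈ S, ∀ i j, minor (z ν) (z (ν + 1)) i j ∈ Set.Icc (-K) K := by
    intro ν hν i j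
    set mm := minor (z ν) (z (ν + 1)) i j with hmm
    have h1 : ((mm ^ 2 : ℤ) : ℝ) ≤ 2 * ((gram (z ν) (z (ν + 1)) : ℝ)) := by
      exact_mod_cast minor_sq_le (z ν) (z (ν + 1)) i j
    have h3 : mm ^ 2 ≤ K := by
      have h2 : ((mm ^ 2 : ℤ) : ℝ) ≤ ((K : ℤ) : ℝ) :=
        le_trans (by nlinarith [hgram ν hν]) (Int.le_ceil _)
      exact_mod_cast h2
    have habs : |mm| ≤ mm ^ 2 := by
      rcases eq_or_ne mm 0 with h | h
      · simp [h]
      · have h4 : (1 : ℤ) ≤ |mm| := Int.one_le_abs h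
        nlinarith [sq_abs mm, abs_nonneg mm]
    have := abs_le.1 (le_trans habs h3)
    exact ⟨this.1, this.2⟩
  -- finitely many possible minor matrices
  set T : Set (Fin d → Fin d → ℤ) :=
    Set.pi Set.univ (fun _ : Fin d => Set.pi Set.univ (fun _ : Fin d => Set.Icc (-K) K)) with hT
  have hTfin : T.Finite :=
    Set.Finite.pi fun _ => Set.Finite.pi fun _ => Set.finite_Icc _ _
  set F : ℕ → (Fin d → Fin d → ℤ) := fun ν => minor (z ν) (z (ν + 1)) with hF
  have hmemT : ∀ ν ∈ S, F ν ∈ T := by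
    intro ν hν
    simp only [hT, Set.mem_pi, Set.mem_univ, forall_true_left]
    intro i j
    exact hK ν hν i j
  -- pigeonhole: some fiber is infinite
  obtain ⟨m, hfib⟩ : ∃ m, {ν | ν ∈ S ∧ F ν = m}.Infinite := by
    by_contra h
    push_neg at h
    refine hSinf (Set.Finite.subset (Set.Finite.biUnion hTfin
      (fun m _ => (h m))) ?_)
    intro ν hν
    exact Set.mem_biUnion (hmemT ν hν) ⟨hν, rfl⟩
  obtain ⟨ν0, hν0S, hν0m⟩ := hfib.nonempty
  have hmval : ∀ ν, F ν = m → ∀ i j, m i j = minor (z ν) (z (ν + 1)) i j := by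
    intro ν hν i j; rw [← hν]
  -- the plane determined by m
  set P : Set (EuclideanSpace ℝ (Fin d)) := {x | ∀ i j k,
    x i * (m j k : ℝ) - x j * (m i k : ℝ) + x k * (m i j : ℝ) = 0} with hPdef
  have hzP : ∀ ν, F ν = m → intEmb (z ν) ∈ P := by
    intro ν hν i j k
    have h1 := rel_a (z ν) (z (ν + 1)) i j k
    have h2 : (z ν i : ℝ) * (minor (z ν) (z (ν+1)) j k : ℝ)
        - (z ν j : ℝ) * (minor (z ν) (z (ν+1)) i k : ℝ)
        + (z ν k : ℝ) * (minor (z ν) (z (ν+1)) i j : ℝ) = 0 := by exact_mod_cast h1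
    simp only [hmval ν hν]
    exact h2
  have hPspan : ∀ x ∈ P, x ∈ Submodule.span ℝ {intEmb (z ν0), intEmb (z (ν0 + 1))} := by
    intro x hx
    obtain ⟨i0, j0, h0⟩ := exists_minor_ne_zero (z ν0) (z (ν0 + 1)) (hz ν0) (hindep ν0)
    refine mem_span_of_minors (z ν0) (z (ν0 + 1)) i0 j0 h0 x ?_
    intro i j k
    have := hx i j k
    simpa only [hmval ν0 hν0m] using this
  have hPsmul : ∀ (r : ℝ), ∀ x ∈ P, r • x ∈ P := by
    intro r x hx i j k
    have h := hx i j k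
    have : (r • x) i = r * x i := rfl
    simp only [PiLp.smul_apply, smul_eq_mul]
    linear_combination r * h
  have hPclosed : IsClosed P := by
    have : P = ⋂ i, ⋂ j, ⋂ k, {x : EuclideanSpace ℝ (Fin d) |
        x i * (m j k : ℝ) - x j * (m i k : ℝ) + x k * (m i j : ℝ) = 0} := by
      ext x; simp [hPdef, Set.mem_iInter]
    rw [this]
    refine isClosed_iInter fun i => isClosed_iInter fun j => isClosed_iInter fun k =>
      isClosed_eq ?_ continuous_const
    fun_prop
  have hPℓ : ∀ x ∈ P, x ∈ ℓ → x = 0 := by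
    intro x hxP hxℓ
    have : x ∈ ℓ ⊓ Submodule.span ℝ {intEmb (z ν0), intEmb (z (ν0 + 1))} :=
      Submodule.mem_inf.2 ⟨hxℓ, hPspan x hxP⟩
    rw [havoid ν0] at this
    simpa using this
  -- compact set of unit vectors in P
  set Ksp : Set (EuclideanSpace ℝ (Fin d)) := P ∩ Metric.sphere 0 1 with hKsp
  have hKcompact : IsCompact Ksp := (isCompact_sphere 0 1).inter_left hPclosed
  have hzν0ne : intEmb (z ν0) ≠ 0 := by
    intro h
    have := one_le_norm_intEmb (z ν0) (hz ν0)
    rw [h] at this; norm_num at this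
  have hKne : Ksp.Nonempty := by
    refine ⟨‖intEmb (z ν0)‖⁻¹ • intEmb (z ν0), hPsmul _ _ (hzP ν0 hν0m), ?_⟩
    have h1 : ‖(‖intEmb (z ν0)‖⁻¹ : ℝ) • intEmb (z ν0)‖ = 1 := norm_smul_inv_norm hzν0ne
    simpa [Metric.mem_sphere, dist_eq_norm] using h1
  obtain ⟨u, huK, humin'⟩ := hKcompact.exists_isMinOn hKne
    ((continuous_infDist_pt (ℓ : Set (EuclideanSpace ℝ (Fin d)))).continuousOn)
  have humin : ∀ y ∈ Ksp, infDist u (ℓ : Set (EuclideanSpace ℝ (Fin d)))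
      ≤ infDist y (ℓ : Set (EuclideanSpace ℝ (Fin d))) := fun y hy => humin' hy
  set c : ℝ := infDist u (ℓ : Set (EuclideanSpace ℝ (Fin d))) with hc
  have hcpos : 0 < c := by
    rw [hc]
    refine (hℓcl.notMem_iff_infDist_pos hℓne).1 ?_
    intro hu
    have := hPℓ u huK.1 hu
    rw [this] at huK
    have h2 := huK.2
    simp at h2
  -- lower bound: infDist x ℓ ≥ c * ‖x‖ for x ∈ P
  have hlow : ∀ x ∈ P, x ≠ 0 → c * ‖x‖ ≤ infDist x (ℓ : Set (EuclideanSpace ℝ (Fin d))) := by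
    intro x hxP hx0
    have hn : 0 < ‖x‖ := norm_pos_iff.2 hx0
    set u' := ‖x‖⁻¹ • x with hu'
    have hu'K : u' ∈ Ksp := by
      refine ⟨hPsmul _ _ hxP, ?_⟩
      have h1 : ‖(‖x‖⁻¹ : ℝ) • x‖ = 1 := norm_smul_inv_norm hx0
      simpa [hu', Metric.mem_sphere, dist_eq_norm] using h1
    rw [Metric.infDist_eq_iInf]
    have : Nonempty ↥(ℓ : Set (EuclideanSpace ℝ (Fin d))) := ⟨⟨0, ℓ.zero_mem⟩⟩
    refine le_ciInf fun y => ?_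
    have hyℓ : (y : EuclideanSpace ℝ (Fin d)) ∈ ℓ := y.2
    have hd : dist x (y : EuclideanSpace ℝ (Fin d)) = ‖x‖ * dist u' (‖x‖⁻¹ • (y : EuclideanSpace ℝ (Fin d))) := by
      rw [dist_eq_norm, dist_eq_norm, ← norm_smul_of_nonneg hn.le, smul_sub, hu',
        smul_inv_smul₀ hn.ne', smul_inv_smul₀ hn.ne']
    rw [hd]
    have h1 : c ≤ dist u' (‖x‖⁻¹ • (y : EuclideanSpace ℝ (Fin d))) :=
      le_trans (humin u' hu'K)
        (Metric.infDist_le_dist_of_mem (ℓ.smul_mem _ hyℓ))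
    calc c * ‖x‖ = ‖x‖ * c := mul_comm _ _
      _ ≤ ‖x‖ * dist u' (‖x‖⁻¹ • (y : EuclideanSpace ℝ (Fin d))) :=
          mul_le_mul_of_nonneg_left h1 hn.le
  -- final contradiction
  have hfreqfib : ∃ᶠ ν in atTop, ν ∈ S ∧ F ν = m :=
    Nat.frequently_atTop_iff_infinite.2 hfib
  have hev : ∀ᶠ ν in atTop, infDist (intEmb (z ν)) (ℓ : Set (EuclideanSpace ℝ (Fin d))) < c :=
    hdist.eventually_lt_const hcpos
  obtain ⟨ν, ⟨hνS, hνm⟩, hνd⟩ := (hfreqfib.and_eventually hev).exists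
  have hzνP := hzP ν hνm
  have hzνne : intEmb (z ν) ≠ 0 := by
    intro h
    have := one_le_norm_intEmb (z ν) (hz ν)
    rw [h] at this; norm_num at this
  have h1 := hlow _ hzνP hzνne
  have h2 := one_le_norm_intEmb (z ν) (hz ν)
  nlinarith [hνd]
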